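/- For every real number k and every A ∈ (0,1) there is a constant C > 0 such that for every real m ≤ -1 and every measurable function f : (0,A) → ℂ one has ∫₀^A r^{2m-1} (-log r)^{k-2} ( ∫₀^r ρ^{-m} |f(ρ)| dρ )² dr ≤ C · ∫₀^A |f(r)|² r (-log r)^k dr (an inequality in [0, ∞]). -/

import Mathlib

open MeasureTheory
open scoped ENNReal


lemma aux_log_rpow_bound (b : ℝ) (hb : 0 < b) (x : ℝ) (hx0 : 0 < x) (hx1 : x < 1) :
    (-Real.log x) ^ b ≤ (2*b) ^ b * x ^ (-(1/2) : ℝ) := by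
  have hlx : 0 < -Real.log x := by
    have := Real.log_neg hx0 hx1; linarith
  set y := x ^ (-(1/(2*b)) : ℝ) with hy
  have hy0 : 0 < y := Real.rpow_pos_of_pos hx0 _
  have hlogy : Real.log y = (-(1/(2*b))) * Real.log x := Real.log_rpow hx0 _
  have h2 : Real.log y ≤ y := by
    have := Real.log_le_sub_one_of_pos hy0; linarith
  have h3 : -Real.log x ≤ (2*b) * y := by
    have h1 : -Real.log x = (2*b) * Real.log y := by
      rw [hlogy]; field_simp
    rw [h1]; nlinarith
  calc (-Real.log x) ^ b ≤ ((2*b) * y) ^ b := Real.rpow_le_rpow hlx.le h3 hb.le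
    _ = (2*b)^b * y^b := Real.mul_rpow (by linarith) hy0.le
    _ = (2*b)^b * x ^ (-(1/2):ℝ) := by
        have he : (-(1/(2*b)))*b = -(1/2) := by
          field_simp
        rw [hy, ← Real.rpow_mul hx0.le, he]

lemma aux_key (b A : ℝ) (hA0 : 0 < A) (hA1 : A < 1) :
    ∃ C₂ : ℝ, 0 < C₂ ∧ ∀ r ∈ Set.Ioo (0:ℝ) A,
      ∫⁻ ρ in Set.Ioo (0:ℝ) r, ENNReal.ofReal (ρ * (-Real.log ρ) ^ b) ≤
        ENNReal.ofReal (C₂ * ((r*r) * (-Real.log r) ^ b)) := by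
  set lA := -Real.log A with hlA
  have hlA0 : 0 < lA := by
    have := Real.log_neg hA0 hA1; rw [hlA]; linarith
  rcases le_or_gt b 0 with hb | hb
  · refine ⟨1, one_pos, fun r hr => ?_⟩
    obtain ⟨hr0, hrA⟩ := hr
    have hr1 : r < 1 := hrA.trans hA1
    have hLr : 0 < -Real.log r := by have := Real.log_neg hr0 hr1; linarith
    have hpt : ∀ ρ ∈ Set.Ioo (0:ℝ) r, ENNReal.ofReal (ρ * (-Real.log ρ)^b)
        ≤ ENNReal.ofReal (r * (-Real.log r)^b) := by
      intro ρ hρ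
      obtain ⟨hρ0, hρr⟩ := hρ
      apply ENNReal.ofReal_le_ofReal
      have hlog : -Real.log r ≤ -Real.log ρ := by
        have := Real.log_le_log hρ0 hρr.le; linarith
      have hmono : (-Real.log ρ)^b ≤ (-Real.log r)^b :=
        Real.rpow_le_rpow_of_nonpos hLr hlog hb
      have h1 : (0:ℝ) ≤ (-Real.log ρ)^b := Real.rpow_nonneg (by linarith) _
      nlinarith
    calc ∫⁻ ρ in Set.Ioo (0:ℝ) r, ENNReal.ofReal (ρ * (-Real.log ρ) ^ b)
        ≤ ∫⁻ _ in Set.Ioo (0:ℝ) r, ENNReal.ofReal (r * (-Real.log r)^b) :=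
          setLIntegral_mono' measurableSet_Ioo hpt
      _ = ENNReal.ofReal (r * (-Real.log r)^b) * volume (Set.Ioo (0:ℝ) r) :=
          setLIntegral_const _ _
      _ = ENNReal.ofReal (r * (-Real.log r)^b) * ENNReal.ofReal r := by
          rw [Real.volume_Ioo, sub_zero]
      _ = ENNReal.ofReal (r * (-Real.log r)^b * r) := by
          rw [← ENNReal.ofReal_mul (by positivity)]
      _ ≤ ENNReal.ofReal (1 * ((r*r) * (-Real.log r)^b)) := by
          apply ENNReal.ofReal_le_ofReal; ring_nf; exact le_rfl
  · refine ⟨2^b + (2*b)^b * lA^(-b), by positivity, fun r hr => ?_⟩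
    obtain ⟨hr0, hrA⟩ := hr
    have hr1 : r < 1 := hrA.trans hA1
    have hLr : 0 < -Real.log r := by have := Real.log_neg hr0 hr1; linarith
    have hrr0 : 0 < r * r := by positivity
    have hrrr : r * r < r := by nlinarith
    have hsplit : Set.Ioo (0:ℝ) r = Set.Ioo (0:ℝ) (r*r) ∪ Set.Ico (r*r) r := by
      rw [Set.Ioo_union_Ico_eq_Ioo hrr0 hrrr.le]
    have hdisj : Disjoint (Set.Ioo (0:ℝ) (r*r)) (Set.Ico (r*r) r) := by
      apply Set.disjoint_left.2
      rintro x ⟨_, hx2⟩ ⟨hx3, _⟩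
      exact absurd hx3 (not_le.2 hx2)
    have hLrlA : lA ≤ -Real.log r := by
      have := Real.log_le_log hr0 hrA.le; rw [hlA]; linarith
    -- part 1
    have part1 : ∫⁻ ρ in Set.Ioo (0:ℝ) (r*r), ENNReal.ofReal (ρ * (-Real.log ρ) ^ b)
        ≤ ENNReal.ofReal ((2*b)^b * lA^(-b) * ((r*r) * (-Real.log r)^b)) := by
      have hpt : ∀ ρ ∈ Set.Ioo (0:ℝ) (r*r), ENNReal.ofReal (ρ * (-Real.log ρ)^b)
          ≤ ENNReal.ofReal ((2*b)^b * r) := by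
        intro ρ hρ
        obtain ⟨hρ0, hρrr⟩ := hρ
        have hρ1 : ρ < 1 := by nlinarith
        apply ENNReal.ofReal_le_ofReal
        have hlb := aux_log_rpow_bound b hb ρ hρ0 hρ1
        have hhalf : ρ * ρ ^ (-(1/2):ℝ) = ρ ^ ((1:ℝ)/2) := by
          nth_rewrite 1 [← Real.rpow_one ρ]
          rw [← Real.rpow_add hρ0]
          norm_num
        have hsq : ρ ^ ((1:ℝ)/2) ≤ r := by
          have h1 : ρ ^ ((1:ℝ)/2) ≤ (r*r) ^ ((1:ℝ)/2) :=
            Real.rpow_le_rpow hρ0.le hρrr.le (by norm_num)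
          have h2 : (r*r : ℝ) = r ^ (2:ℝ) := by
            rw [Real.rpow_two]; ring
          have h3 : (r*r) ^ ((1:ℝ)/2) = r := by
            rw [h2, ← Real.rpow_mul hr0.le]; norm_num
          linarith
        have hρnn : (0:ℝ) ≤ ρ ^ (-(1/2):ℝ) := Real.rpow_nonneg hρ0.le _
        calc ρ * (-Real.log ρ)^b ≤ ρ * ((2*b)^b * ρ^(-(1/2):ℝ)) := by
              apply mul_le_mul_of_nonneg_left hlb hρ0.le
          _ = (2*b)^b * (ρ * ρ^(-(1/2):ℝ)) := by ring
          _ = (2*b)^b * ρ^((1:ℝ)/2) := by rw [hhalf]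
          _ ≤ (2*b)^b * r := by
              apply mul_le_mul_of_nonneg_left hsq (by positivity)
      calc ∫⁻ ρ in Set.Ioo (0:ℝ) (r*r), ENNReal.ofReal (ρ * (-Real.log ρ) ^ b)
          ≤ ∫⁻ _ in Set.Ioo (0:ℝ) (r*r), ENNReal.ofReal ((2*b)^b * r) :=
            setLIntegral_mono' measurableSet_Ioo hpt
        _ = ENNReal.ofReal ((2*b)^b * r) * volume (Set.Ioo (0:ℝ) (r*r)) :=
            setLIntegral_const _ _
        _ = ENNReal.ofReal ((2*b)^b * r) * ENNReal.ofReal (r*r) := by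
            rw [Real.volume_Ioo, sub_zero]
        _ = ENNReal.ofReal ((2*b)^b * r * (r*r)) := by
            rw [← ENNReal.ofReal_mul (by positivity)]
        _ ≤ ENNReal.ofReal ((2*b)^b * lA^(-b) * ((r*r) * (-Real.log r)^b)) := by
            apply ENNReal.ofReal_le_ofReal
            have h1 : (1:ℝ) ≤ lA^(-b) * (-Real.log r)^b := by
              have h2 : lA^b ≤ (-Real.log r)^b := Real.rpow_le_rpow hlA0.le hLrlA hb.le
              have h3 : lA^(-b) * lA^b = 1 := by
                rw [← Real.rpow_add hlA0]; simp
              have h4 : (0:ℝ) < lA^(-b) := Real.rpow_pos_of_pos hlA0 _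
              nlinarith
            have h5 : (0:ℝ) < (2*b)^b := Real.rpow_pos_of_pos (by linarith) _
            nlinarith [mul_pos hrr0 h5, hr1.le]
    -- part 2
    have part2 : ∫⁻ ρ in Set.Ico (r*r) r, ENNReal.ofReal (ρ * (-Real.log ρ) ^ b)
        ≤ ENNReal.ofReal (2^b * ((r*r) * (-Real.log r)^b)) := by
      have hpt : ∀ ρ ∈ Set.Ico (r*r) r, ENNReal.ofReal (ρ * (-Real.log ρ)^b)
          ≤ ENNReal.ofReal (r * (2^b * (-Real.log r)^b)) := by
        intro ρ hρ
        obtain ⟨hρrr, hρr⟩ := hρ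
        have hρ0 : 0 < ρ := lt_of_lt_of_le hrr0 hρrr
        have hρ1 : ρ < 1 := hρr.trans hr1
        apply ENNReal.ofReal_le_ofReal
        have hLρ0 : 0 < -Real.log ρ := by have := Real.log_neg hρ0 hρ1; linarith
        have hlog2 : -Real.log ρ ≤ 2 * (-Real.log r) := by
          have h1 : Real.log (r*r) ≤ Real.log ρ := Real.log_le_log hrr0 hρrr
          have h2 : Real.log (r*r) = Real.log r + Real.log r := Real.log_mul hr0.ne' hr0.ne'
          linarith
        have hmono : (-Real.log ρ)^b ≤ (2 * (-Real.log r))^b :=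
          Real.rpow_le_rpow hLρ0.le hlog2 hb.le
        have hmul : (2 * (-Real.log r))^b = 2^b * (-Real.log r)^b :=
          Real.mul_rpow (by norm_num) hLr.le
        have h1 : (0:ℝ) ≤ (-Real.log ρ)^b := Real.rpow_nonneg hLρ0.le _
        have h2 : (0:ℝ) ≤ 2^b * (-Real.log r)^b := by positivity
        nlinarith [hmul ▸ hmono]
      calc ∫⁻ ρ in Set.Ico (r*r) r, ENNReal.ofReal (ρ * (-Real.log ρ) ^ b)
          ≤ ∫⁻ _ in Set.Ico (r*r) r, ENNReal.ofReal (r * (2^b * (-Real.log r)^b)) :=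
            setLIntegral_mono' measurableSet_Ico hpt
        _ = ENNReal.ofReal (r * (2^b * (-Real.log r)^b)) * volume (Set.Ico (r*r) r) :=
            setLIntegral_const _ _
        _ ≤ ENNReal.ofReal (r * (2^b * (-Real.log r)^b)) * ENNReal.ofReal r := by
            rw [Real.volume_Ico]
            exact mul_le_mul_right (ENNReal.ofReal_le_ofReal (by nlinarith)) _
        _ = ENNReal.ofReal (r * (2^b * (-Real.log r)^b) * r) := by
            rw [← ENNReal.ofReal_mul (by positivity)]
        _ ≤ ENNReal.ofReal (2^b * ((r*r) * (-Real.log r)^b)) := by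
            apply ENNReal.ofReal_le_ofReal; ring_nf; exact le_rfl
    calc ∫⁻ ρ in Set.Ioo (0:ℝ) r, ENNReal.ofReal (ρ * (-Real.log ρ) ^ b)
        = (∫⁻ ρ in Set.Ioo (0:ℝ) (r*r), ENNReal.ofReal (ρ * (-Real.log ρ) ^ b))
          + ∫⁻ ρ in Set.Ico (r*r) r, ENNReal.ofReal (ρ * (-Real.log ρ) ^ b) := by
          rw [hsplit, lintegral_union measurableSet_Ico hdisj]
      _ ≤ ENNReal.ofReal ((2*b)^b * lA^(-b) * ((r*r) * (-Real.log r)^b))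
          + ENNReal.ofReal (2^b * ((r*r) * (-Real.log r)^b)) := add_le_add part1 part2
      _ ≤ ENNReal.ofReal ((2^b + (2*b)^b * lA^(-b)) * ((r*r) * (-Real.log r)^b)) := by
          rw [← ENNReal.ofReal_add (by positivity) (by positivity)]
          apply ENNReal.ofReal_le_ofReal
          ring_nf
          exact le_rfl


lemma aux_T_step (A ε : ℝ) (hA1 : A < 1) (hε0 : 0 < ε) (hεA : ε ≤ A) :
    ∫⁻ r in Set.Ioo ε A, ENNReal.ofReal (r^(-1:ℝ) * (-Real.log r)^(-2:ℝ))
      ≤ ENNReal.ofReal (-Real.log A)⁻¹ := by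
  set fr : ℝ → ℝ := fun r => r^(-1:ℝ) * (-Real.log r)^(-2:ℝ) with hfr
  set F : ℝ → ℝ := fun r => -(Real.log r)⁻¹ with hF
  have hsub : Set.Icc ε A ⊆ Set.Ioo 0 1 := fun x hx =>
    ⟨lt_of_lt_of_le hε0 hx.1, lt_of_le_of_lt hx.2 hA1⟩
  have hfr_eq : ∀ r ∈ Set.Ioo (0:ℝ) 1, fr r = r⁻¹ / (Real.log r)^2 := by
    intro r hr
    have hr0 : 0 < r := hr.1
    have hL : 0 < -Real.log r := by
      have := Real.log_neg hr.1 hr.2; linarith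
    rw [hfr]
    simp only
    have h2 : (-Real.log r)^(-2:ℝ) = ((Real.log r)^2)⁻¹ := by
      rw [show (-2:ℝ) = -(2:ℝ) by norm_num, Real.rpow_neg hL.le, Real.rpow_two, neg_sq]
    rw [Real.rpow_neg_one, h2]
    ring
  have hderiv : ∀ r ∈ Set.Icc ε A, HasDerivAt F (fr r) r := by
    intro r hr
    have hr' := hsub hr
    have hr0 : 0 < r := hr'.1
    have hlogne : Real.log r ≠ 0 := by
      have := Real.log_neg hr'.1 hr'.2; linarith
    have h1 := Real.hasDerivAt_log hr0.ne'
    have h2 := h1.inv hlogne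
    have h3 := h2.neg
    rw [hfr_eq r hr']
    convert h3 using 1
    · rfl
    · rfl
    · rfl
    · ring
  have hcont : ContinuousOn fr (Set.Icc ε A) := by
    apply ContinuousOn.mul
    · apply ContinuousOn.rpow_const continuousOn_id
      intro x hx; exact Or.inl (ne_of_gt (hsub hx).1)
    · apply ContinuousOn.rpow_const
      · exact (Real.continuousOn_log.mono (fun x hx => ne_of_gt (hsub hx).1)).neg
      · intro x hx
        have := Real.log_neg (hsub hx).1 (hsub hx).2
        exact Or.inl (by linarith)
  have hint : IntervalIntegrable fr volume ε A := by
    apply ContinuousOn.intervalIntegrable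
    rwa [Set.uIcc_of_le hεA]
  have hftc : ∫ x in ε..A, fr x = F A - F ε :=
    intervalIntegral.integral_eq_sub_of_hasDerivAt
      (fun x hx => hderiv x (by rwa [Set.uIcc_of_le hεA] at hx)) hint
  have hIoo : IntegrableOn fr (Set.Ioo ε A) volume :=
    ((intervalIntegrable_iff_integrableOn_Ioc_of_le hεA).1 hint).mono_set
      Set.Ioo_subset_Ioc_self
  have hnn : 0 ≤ᵐ[volume.restrict (Set.Ioo ε A)] fr := by
    refine (ae_restrict_iff' measurableSet_Ioo).2 (ae_of_all _ fun x hx => ?_)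
    have hx0 : 0 < x := lt_of_lt_of_le hε0 hx.1.le
    have : (0:ℝ) ≤ (-Real.log x)^(-2:ℝ) := by
      apply Real.rpow_nonneg
      have := Real.log_neg hx0 (hx.2.trans_le hA1.le)
      linarith
    have h2 : (0:ℝ) ≤ x^(-1:ℝ) := Real.rpow_nonneg hx0.le _
    exact mul_nonneg h2 this
  have heq : ∫⁻ r in Set.Ioo ε A, ENNReal.ofReal (fr r)
      = ENNReal.ofReal (∫ r in Set.Ioo ε A, fr r) :=
    (ofReal_integral_eq_lintegral_ofReal hIoo hnn).symm
  rw [heq]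
  apply ENNReal.ofReal_le_ofReal
  have h4 : ∫ r in Set.Ioo ε A, fr r = F A - F ε := by
    rw [← MeasureTheory.integral_Ioc_eq_integral_Ioo, ← intervalIntegral.integral_of_le hεA]
    exact hftc
  rw [h4]
  show -(Real.log A)⁻¹ - -(Real.log ε)⁻¹ ≤ (-Real.log A)⁻¹
  have h5 : Real.log ε ≤ 0 := Real.log_nonpos hε0.le (by linarith)
  have h6 : (Real.log ε)⁻¹ ≤ 0 := inv_nonpos.2 h5
  rw [inv_neg]
  linarith

lemma aux_T (A : ℝ) (hA0 : 0 < A) (hA1 : A < 1) :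
    ∫⁻ r in Set.Ioo (0:ℝ) A, ENNReal.ofReal (r^(-1:ℝ) * (-Real.log r)^(-2:ℝ))
      ≤ ENNReal.ofReal (-Real.log A)⁻¹ := by
  set g : ℝ → ℝ≥0∞ := fun r => ENNReal.ofReal (r^(-1:ℝ) * (-Real.log r)^(-2:ℝ)) with hg
  have hgm : Measurable g := by
    apply Measurable.ennreal_ofReal
    measurability
  set u : ℕ → ℝ := fun n => A / (n + 2) with hu
  have hu0 : ∀ n, 0 < u n := fun n => by positivity
  have huA : ∀ n, u n ≤ A := fun n => by
    rw [hu]; simp only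
    rw [div_le_iff₀ (by positivity)]
    nlinarith [hA0]
  have hmono : Monotone (fun n => (Set.Ioo (u n) A).indicator g) := by
    intro n m hnm
    have hc : (n:ℝ) ≤ m := Nat.cast_le.2 hnm
    apply Set.indicator_le_indicator_of_subset
    · apply Set.Ioo_subset_Ioo_left
      rw [hu]
      exact (div_le_div_iff_of_pos_left hA0 (by positivity) (by positivity)).2 (by linarith)
    · intro x; exact zero_le
  have hsup : (fun r => ⨆ n, (Set.Ioo (u n) A).indicator g r)
      = (Set.Ioo (0:ℝ) A).indicator g := by
    funext r
    by_cases hr : r ∈ Set.Ioo (0:ℝ) A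
    · rw [Set.indicator_of_mem hr]
      apply le_antisymm
      · apply iSup_le; intro n
        by_cases h : r ∈ Set.Ioo (u n) A
        · rw [Set.indicator_of_mem h]
        · rw [Set.indicator_of_notMem h]; exact zero_le
      · obtain ⟨n, hn⟩ : ∃ n : ℕ, u n < r := by
          obtain ⟨n, hn⟩ := exists_nat_gt (A / r)
          refine ⟨n, ?_⟩
          rw [hu]; simp only
          rw [div_lt_iff₀ (by positivity)]
          have h2 : A / r < n := hn
          rw [div_lt_iff₀ hr.1] at h2
          nlinarith [hr.1]
        have hmem : r ∈ Set.Ioo (u n) A := ⟨hn, hr.2⟩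
        calc g r = (Set.Ioo (u n) A).indicator g r := (Set.indicator_of_mem hmem g).symm
          _ ≤ ⨆ n, (Set.Ioo (u n) A).indicator g r :=
              le_iSup (fun n => (Set.Ioo (u n) A).indicator g r) n
    · rw [Set.indicator_of_notMem hr]
      apply le_antisymm _ (zero_le)
      apply iSup_le; intro n
      rw [Set.indicator_of_notMem]
      intro h
      exact hr ⟨lt_trans (hu0 n) h.1, h.2⟩
  calc ∫⁻ r in Set.Ioo (0:ℝ) A, g r
      = ∫⁻ r, (Set.Ioo (0:ℝ) A).indicator g r := (lintegral_indicator measurableSet_Ioo g).symm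
    _ = ∫⁻ r, ⨆ n, (Set.Ioo (u n) A).indicator g r := by rw [hsup]
    _ = ⨆ n, ∫⁻ r, (Set.Ioo (u n) A).indicator g r := by
        rw [lintegral_iSup (fun n => hgm.indicator measurableSet_Ioo) hmono]
    _ ≤ ENNReal.ofReal (-Real.log A)⁻¹ := by
        apply iSup_le; intro n
        rw [lintegral_indicator measurableSet_Ioo]
        exact aux_T_step A (u n) hA1 (hu0 n) (huA n)


lemma aux_CS (k m : ℝ) (f : ℝ → ℂ) (hf : Measurable f) (r : ℝ) (hr1 : r < 1) :
    (∫⁻ ρ in Set.Ioo (0:ℝ) r, ENNReal.ofReal (ρ ^ (-m) * ‖f ρ‖)) ^ 2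
      ≤ (∫⁻ ρ in Set.Ioo (0:ℝ) r, ENNReal.ofReal (ρ ^ (-2*m-1) * (-Real.log ρ) ^ (-k)))
        * ∫⁻ ρ in Set.Ioo (0:ℝ) r,
            ENNReal.ofReal (‖f ρ‖ ^ 2 * ρ * (-Real.log ρ) ^ k) := by
  set G : ℝ → ℝ≥0∞ := fun ρ =>
    ENNReal.ofReal (ρ ^ ((-2*m-1)/2) * (-Real.log ρ) ^ (-k/2)) with hG
  set H : ℝ → ℝ≥0∞ := fun ρ =>
    ENNReal.ofReal (ρ ^ ((1:ℝ)/2) * (-Real.log ρ) ^ (k/2) * ‖f ρ‖) with hH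
  have habs : Measurable fun ρ => ‖f ρ‖ := by
    exact continuous_norm.measurable.comp hf
  have hGm : Measurable G := by
    apply Measurable.ennreal_ofReal; measurability
  have hHm : Measurable H := by
    apply Measurable.ennreal_ofReal
    apply Measurable.mul
    · measurability
    · exact habs
  have hpq : Real.HolderConjugate 2 2 := Real.HolderConjugate.two_two
  have hCS := ENNReal.lintegral_mul_le_Lp_mul_Lq (volume.restrict (Set.Ioo (0:ℝ) r)) hpq
    hGm.aemeasurable hHm.aemeasurable
  have hLpos : ∀ ρ ∈ Set.Ioo (0:ℝ) r, 0 < -Real.log ρ := by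
    intro ρ hρ
    have := Real.log_neg hρ.1 (hρ.2.trans hr1)
    linarith
  have heq1 : ∫⁻ ρ in Set.Ioo (0:ℝ) r, ENNReal.ofReal (ρ ^ (-m) * ‖f ρ‖)
      = ∫⁻ ρ in Set.Ioo (0:ℝ) r, (G * H) ρ := by
    apply setLIntegral_congr_fun measurableSet_Ioo
    intro ρ hρ
    have hρ0 : 0 < ρ := hρ.1
    have hL := hLpos ρ hρ
    simp only [Pi.mul_apply, hG, hH]
    rw [← ENNReal.ofReal_mul (by positivity)]
    congr 1
    have e1 : ρ ^ ((-2*m-1)/2) * ρ ^ ((1:ℝ)/2) = ρ ^ (-m) := by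
      rw [← Real.rpow_add hρ0]; norm_num; ring_nf
    have e2 : (-Real.log ρ) ^ (-k/2) * (-Real.log ρ) ^ (k/2) = 1 := by
      have he : -k/2 + k/2 = (0:ℝ) := by ring
      rw [← Real.rpow_add hL, he, Real.rpow_zero]
    calc ρ ^ (-m) * ‖f ρ‖
        = (ρ ^ ((-2*m-1)/2) * ρ ^ ((1:ℝ)/2)) * ((-Real.log ρ) ^ (-k/2) * (-Real.log ρ) ^ (k/2))
          * ‖f ρ‖ := by rw [e1, e2]; ring
      _ = ρ ^ ((-2*m-1)/2) * (-Real.log ρ) ^ (-k/2)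
          * (ρ ^ ((1:ℝ)/2) * (-Real.log ρ) ^ (k/2) * ‖f ρ‖) := by ring
  have heq2 : ∫⁻ ρ in Set.Ioo (0:ℝ) r, G ρ ^ (2:ℝ)
      = ∫⁻ ρ in Set.Ioo (0:ℝ) r, ENNReal.ofReal (ρ ^ (-2*m-1) * (-Real.log ρ) ^ (-k)) := by
    apply setLIntegral_congr_fun measurableSet_Ioo
    intro ρ hρ
    have hρ0 : 0 < ρ := hρ.1
    have hL := hLpos ρ hρ
    simp only [hG]
    rw [ENNReal.rpow_two, ← ENNReal.ofReal_pow (by positivity)]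
    congr 1
    have e1 : (ρ ^ ((-2*m-1)/2)) ^ (2:ℕ) = ρ ^ (-2*m-1) := by
      rw [← Real.rpow_natCast (ρ ^ ((-2*m-1)/2)) 2, ← Real.rpow_mul hρ0.le]
      congr 1
      push_cast; ring
    have e2 : ((-Real.log ρ) ^ (-k/2)) ^ (2:ℕ) = (-Real.log ρ) ^ (-k) := by
      rw [← Real.rpow_natCast ((-Real.log ρ) ^ (-k/2)) 2, ← Real.rpow_mul hL.le]
      congr 1
      push_cast; ring
    rw [mul_pow, e1, e2]
  have heq3 : ∫⁻ ρ in Set.Ioo (0:ℝ) r, H ρ ^ (2:ℝ)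
      = ∫⁻ ρ in Set.Ioo (0:ℝ) r,
          ENNReal.ofReal (‖f ρ‖ ^ 2 * ρ * (-Real.log ρ) ^ k) := by
    apply setLIntegral_congr_fun measurableSet_Ioo
    intro ρ hρ
    have hρ0 : 0 < ρ := hρ.1
    have hL := hLpos ρ hρ
    simp only [hH]
    rw [ENNReal.rpow_two, ← ENNReal.ofReal_pow (by positivity)]
    congr 1
    have e1 : (ρ ^ ((1:ℝ)/2)) ^ (2:ℕ) = ρ := by
      rw [← Real.rpow_natCast (ρ ^ ((1:ℝ)/2)) 2, ← Real.rpow_mul hρ0.le]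
      norm_num
    have e2 : ((-Real.log ρ) ^ (k/2)) ^ (2:ℕ) = (-Real.log ρ) ^ k := by
      rw [← Real.rpow_natCast ((-Real.log ρ) ^ (k/2)) 2, ← Real.rpow_mul hL.le]
      congr 1
      push_cast; ring
    rw [mul_pow, mul_pow, e1, e2]
    ring
  have hsq : ∀ X : ℝ≥0∞, (X ^ ((1:ℝ)/2)) ^ (2:ℕ) = X := by
    intro X
    rw [← ENNReal.rpow_natCast (X ^ ((1:ℝ)/2)) 2, ← ENNReal.rpow_mul]
    norm_num
  calc (∫⁻ ρ in Set.Ioo (0:ℝ) r, ENNReal.ofReal (ρ ^ (-m) * ‖f ρ‖)) ^ 2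
      = (∫⁻ ρ in Set.Ioo (0:ℝ) r, (G * H) ρ) ^ 2 := by rw [heq1]
    _ ≤ ((∫⁻ ρ in Set.Ioo (0:ℝ) r, G ρ ^ (2:ℝ)) ^ ((1:ℝ)/2)
        * (∫⁻ ρ in Set.Ioo (0:ℝ) r, H ρ ^ (2:ℝ)) ^ ((1:ℝ)/2)) ^ 2 := by
        apply pow_le_pow_left' hCS
    _ = (∫⁻ ρ in Set.Ioo (0:ℝ) r, G ρ ^ (2:ℝ))
        * (∫⁻ ρ in Set.Ioo (0:ℝ) r, H ρ ^ (2:ℝ)) := by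
        rw [mul_pow, hsq, hsq]
    _ = _ := by rw [heq2, heq3]

/-- Weighted Hardy-type inequality (inner integral from `0`): for every real `k` and
`A ∈ (0,1)` there is `C > 0` such that for every real `m ≤ -1` and measurable
`f : (0,A) → ℂ`,
`∫₀^A r^(2m-1) (-log r)^(k-2) (∫₀^r ρ^(-m) |f ρ| dρ)² dr
  ≤ C ∫₀^A |f r|² r (-log r)^k dr` in `[0,∞]`. -/
theorem hardy_weighted_inner_from_zero (k : ℝ) (A : ℝ) (hA0 : 0 < A) (hA1 : A < 1) :
    ∃ C : ℝ, 0 < C ∧ ∀ m : ℝ, m ≤ -1 → ∀ f : ℝ → ℂ, Measurable f →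
      ∫⁻ r in Set.Ioo (0 : ℝ) A,
          ENNReal.ofReal (r ^ (2 * m - 1) * (-Real.log r) ^ (k - 2)) *
            (∫⁻ ρ in Set.Ioo (0 : ℝ) r,
              ENNReal.ofReal (ρ ^ (-m) * ‖f ρ‖)) ^ 2
        ≤ ENNReal.ofReal C *
          ∫⁻ r in Set.Ioo (0 : ℝ) A,
            ENNReal.ofReal (‖f r‖ ^ 2 * r * (-Real.log r) ^ k) := by
  have hlA0 : 0 < -Real.log A := by
    have := Real.log_neg hA0 hA1; linarith
  obtain ⟨C₂, hC₂, hkey⟩ := aux_key (-k) A hA0 hA1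
  refine ⟨C₂ * (-Real.log A)⁻¹, by positivity, ?_⟩
  intro m hm f hf
  set Y := ∫⁻ r in Set.Ioo (0:ℝ) A,
    ENNReal.ofReal (‖f r‖ ^ 2 * r * (-Real.log r) ^ k) with hYdef
  by_cases hYtop : Y = ⊤
  · rw [hYtop, ENNReal.mul_top (by
      simp only [ne_eq, ENNReal.ofReal_eq_zero, not_le]
      positivity)]
    exact le_top
  have hstep : ∀ r ∈ Set.Ioo (0:ℝ) A,
      ENNReal.ofReal (r ^ (2 * m - 1) * (-Real.log r) ^ (k - 2)) *
        (∫⁻ ρ in Set.Ioo (0:ℝ) r, ENNReal.ofReal (ρ ^ (-m) * ‖f ρ‖)) ^ 2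
      ≤ ENNReal.ofReal (C₂ * (r^(-1:ℝ) * (-Real.log r)^(-2:ℝ))) * Y := by
    intro r hr
    obtain ⟨hr0, hrA⟩ := hr
    have hr1 : r < 1 := hrA.trans hA1
    have hLr : 0 < -Real.log r := by
      have := Real.log_neg hr0 hr1; linarith
    have h1 := aux_CS k m f hf r hr1
    have hXpt : ∀ ρ ∈ Set.Ioo (0:ℝ) r,
        ENNReal.ofReal (ρ ^ (-2*m-1) * (-Real.log ρ) ^ (-k))
        ≤ ENNReal.ofReal (r ^ (-2*m-2))
          * ENNReal.ofReal (ρ * (-Real.log ρ) ^ (-k)) := by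
      intro ρ hρ
      obtain ⟨hρ0, hρr⟩ := hρ
      rw [← ENNReal.ofReal_mul (Real.rpow_nonneg hr0.le _)]
      apply ENNReal.ofReal_le_ofReal
      have hLρ : 0 < -Real.log ρ := by
        have := Real.log_neg hρ0 (hρr.trans hr1); linarith
      have e1 : ρ ^ (-2*m-1) = ρ ^ (-2*m-2) * ρ := by
        rw [← Real.rpow_add_one hρ0.ne' (-2*m-2)]
        congr 1; ring
      have e2 : ρ ^ (-2*m-2) ≤ r ^ (-2*m-2) :=
        Real.rpow_le_rpow hρ0.le hρr.le (by linarith)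
      have h3 : (0:ℝ) ≤ (-Real.log ρ) ^ (-k) := Real.rpow_nonneg hLρ.le _
      rw [e1]
      have : ρ ^ (-2*m-2) * ρ * (-Real.log ρ) ^ (-k)
          ≤ r ^ (-2*m-2) * (ρ * (-Real.log ρ) ^ (-k)) := by
        have h4 : (0:ℝ) ≤ ρ * (-Real.log ρ) ^ (-k) := mul_nonneg hρ0.le h3
        calc ρ ^ (-2*m-2) * ρ * (-Real.log ρ) ^ (-k)
            = ρ ^ (-2*m-2) * (ρ * (-Real.log ρ) ^ (-k)) := by ring
          _ ≤ r ^ (-2*m-2) * (ρ * (-Real.log ρ) ^ (-k)) :=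
              mul_le_mul_of_nonneg_right e2 h4
      linarith
    have hX : ∫⁻ ρ in Set.Ioo (0:ℝ) r, ENNReal.ofReal (ρ ^ (-2*m-1) * (-Real.log ρ) ^ (-k))
        ≤ ENNReal.ofReal (r ^ (-2*m-2))
          * ∫⁻ ρ in Set.Ioo (0:ℝ) r, ENNReal.ofReal (ρ * (-Real.log ρ) ^ (-k)) := by
      calc ∫⁻ ρ in Set.Ioo (0:ℝ) r, ENNReal.ofReal (ρ ^ (-2*m-1) * (-Real.log ρ) ^ (-k))
          ≤ ∫⁻ ρ in Set.Ioo (0:ℝ) r, ENNReal.ofReal (r ^ (-2*m-2))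
            * ENNReal.ofReal (ρ * (-Real.log ρ) ^ (-k)) :=
            setLIntegral_mono' measurableSet_Ioo hXpt
        _ = _ := lintegral_const_mul' _ _ ENNReal.ofReal_ne_top
    have hXB : ∫⁻ ρ in Set.Ioo (0:ℝ) r, ENNReal.ofReal (ρ ^ (-2*m-1) * (-Real.log ρ) ^ (-k))
        ≤ ENNReal.ofReal (r ^ (-2*m-2))
          * ENNReal.ofReal (C₂ * ((r*r) * (-Real.log r) ^ (-k))) :=
      hX.trans (mul_le_mul_right (hkey r ⟨hr0, hrA⟩) _)
    have hYr : ∫⁻ ρ in Set.Ioo (0:ℝ) r,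
        ENNReal.ofReal (‖f ρ‖ ^ 2 * ρ * (-Real.log ρ) ^ k) ≤ Y :=
      lintegral_mono_set (Set.Ioo_subset_Ioo_right hrA.le)
    have h2 : (∫⁻ ρ in Set.Ioo (0:ℝ) r, ENNReal.ofReal (ρ ^ (-m) * ‖f ρ‖)) ^ 2
        ≤ (ENNReal.ofReal (r ^ (-2*m-2))
            * ENNReal.ofReal (C₂ * ((r*r) * (-Real.log r) ^ (-k)))) * Y :=
      h1.trans (mul_le_mul' hXB hYr)
    calc ENNReal.ofReal (r ^ (2 * m - 1) * (-Real.log r) ^ (k - 2)) *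
        (∫⁻ ρ in Set.Ioo (0:ℝ) r, ENNReal.ofReal (ρ ^ (-m) * ‖f ρ‖)) ^ 2
        ≤ ENNReal.ofReal (r ^ (2 * m - 1) * (-Real.log r) ^ (k - 2)) *
          ((ENNReal.ofReal (r ^ (-2*m-2))
            * ENNReal.ofReal (C₂ * ((r*r) * (-Real.log r) ^ (-k)))) * Y) :=
          mul_le_mul_right h2 _
      _ = ENNReal.ofReal (C₂ * (r^(-1:ℝ) * (-Real.log r)^(-2:ℝ))) * Y := by
          rw [← mul_assoc]
          congr 1
          rw [← ENNReal.ofReal_mul (Real.rpow_nonneg hr0.le _),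
            ← ENNReal.ofReal_mul (mul_nonneg (Real.rpow_nonneg hr0.le _)
              (Real.rpow_nonneg hLr.le _))]
          congr 1
          have er : r ^ (2*m-1) * r ^ (-2*m-2) * (r*r) = r ^ (-1:ℝ) := by
            have h5 : (r*r : ℝ) = r ^ (2:ℝ) := by rw [Real.rpow_two]; ring
            rw [h5, ← Real.rpow_add hr0, ← Real.rpow_add hr0]
            congr 1; ring
          have el : (-Real.log r) ^ (k-2) * (-Real.log r) ^ (-k) = (-Real.log r) ^ (-2:ℝ) := by
            rw [← Real.rpow_add hLr]
            congr 1; ring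
          calc r ^ (2*m-1) * (-Real.log r) ^ (k-2)
              * (r ^ (-2*m-2) * (C₂ * ((r*r) * (-Real.log r) ^ (-k))))
              = C₂ * ((r ^ (2*m-1) * r ^ (-2*m-2) * (r*r))
                * ((-Real.log r) ^ (k-2) * (-Real.log r) ^ (-k))) := by ring
            _ = C₂ * (r ^ (-1:ℝ) * (-Real.log r) ^ (-2:ℝ)) := by rw [er, el]
  calc ∫⁻ r in Set.Ioo (0:ℝ) A,
      ENNReal.ofReal (r ^ (2 * m - 1) * (-Real.log r) ^ (k - 2)) *
        (∫⁻ ρ in Set.Ioo (0:ℝ) r, ENNReal.ofReal (ρ ^ (-m) * ‖f ρ‖)) ^ 2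
      ≤ ∫⁻ r in Set.Ioo (0:ℝ) A,
          ENNReal.ofReal (C₂ * (r^(-1:ℝ) * (-Real.log r)^(-2:ℝ))) * Y :=
        setLIntegral_mono' measurableSet_Ioo hstep
    _ = (∫⁻ r in Set.Ioo (0:ℝ) A,
          ENNReal.ofReal (C₂ * (r^(-1:ℝ) * (-Real.log r)^(-2:ℝ)))) * Y :=
        lintegral_mul_const' _ _ hYtop
    _ = (ENNReal.ofReal C₂ * ∫⁻ r in Set.Ioo (0:ℝ) A,
          ENNReal.ofReal (r^(-1:ℝ) * (-Real.log r)^(-2:ℝ))) * Y := by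
        congr 1
        calc ∫⁻ r in Set.Ioo (0:ℝ) A,
            ENNReal.ofReal (C₂ * (r^(-1:ℝ) * (-Real.log r)^(-2:ℝ)))
            = ∫⁻ r in Set.Ioo (0:ℝ) A, ENNReal.ofReal C₂
              * ENNReal.ofReal (r^(-1:ℝ) * (-Real.log r)^(-2:ℝ)) := by
              apply lintegral_congr
              intro r
              rw [ENNReal.ofReal_mul hC₂.le]
          _ = _ := lintegral_const_mul' _ _ ENNReal.ofReal_ne_top
    _ ≤ (ENNReal.ofReal C₂ * ENNReal.ofReal (-Real.log A)⁻¹) * Y := by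
        apply mul_le_mul_left
        exact mul_le_mul_right (aux_T A hA0 hA1) _
    _ = ENNReal.ofReal (C₂ * (-Real.log A)⁻¹) * Y := by
        rw [← ENNReal.ofReal_mul hC₂.le]
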